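/- (Quadratic majorization of the Gaussian kernel.) Let Ω be a p×p diagonal matrix with nonnegative diagonal entries, and let γ(z) = exp(−zᵀΩz). Then for all z, z' ∈ ℝ^p, γ(z) ≤ γ(z') − 2 γ(z') (Ωz')ᵀ(z − z') + (2/e) (max_{1≤l≤p} Ω_{ll}) ‖z − z'‖²₂, where e is Euler's number; that is, the right-hand side is a quadratic function of z that majorizes γ and touches it at z = z'. -/

import Mathlib

private lemma gauss_aux_ue (u : ℝ) (_hu : 0 ≤ u) : u * Real.exp (-u) ≤ Real.exp (-1) := by
  have h1 : u ≤ Real.exp (u - 1) := by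
    have := Real.add_one_le_exp (u - 1); linarith
  calc u * Real.exp (-u) ≤ Real.exp (u - 1) * Real.exp (-u) :=
        mul_le_mul_of_nonneg_right h1 (Real.exp_pos _).le
    _ = Real.exp (-1) := by rw [← Real.exp_add]; ring_nf

/-- One-dimensional core of the quadratic majorization. -/
private lemma gauss_aux (a S₁ S₂ B : ℝ) (hS₂0 : 0 ≤ S₂)
    (hq0 : ∀ t : ℝ, 0 ≤ a + 2 * S₁ * t + S₂ * t ^ 2)
    (hCS : ∀ t : ℝ, (S₁ + S₂ * t) ^ 2 ≤ (a + 2 * S₁ * t + S₂ * t ^ 2) * S₂)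
    (hB : 4 * S₂ * Real.exp (-1) ≤ B) :
    Real.exp (-(a + 2 * S₁ + S₂)) ≤ Real.exp (-a) - 2 * S₁ * Real.exp (-a) + B / 2 := by
  -- derivative of the exponent
  have hpoly : ∀ t : ℝ, HasDerivAt (fun t : ℝ => -(a + 2 * S₁ * t + S₂ * t ^ 2))
      (-(2 * S₁ + 2 * S₂ * t)) t := by
    intro t
    have hb : HasDerivAt (fun t : ℝ => 2 * S₁ * t) (2 * S₁) t := by
      simpa using (hasDerivAt_id t).const_mul (2 * S₁)
    have hc : HasDerivAt (fun t : ℝ => S₂ * t ^ 2) (S₂ * (2 * t)) t := by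
      simpa using (hasDerivAt_pow 2 t).const_mul S₂
    have h1 := ((hasDerivAt_const t a).add hb).add hc
    have h2 : HasDerivAt (fun t : ℝ => a + 2 * S₁ * t + S₂ * t ^ 2)
        (2 * S₁ + 2 * S₂ * t) t := by
      exact h1.congr_deriv (by ring)
    exact h2.neg
  have hgd : ∀ t : ℝ, HasDerivAt (fun t : ℝ => Real.exp (-(a + 2 * S₁ * t + S₂ * t ^ 2)))
      (-(2 * S₁ + 2 * S₂ * t) * Real.exp (-(a + 2 * S₁ * t + S₂ * t ^ 2))) t := by
    intro t
    have := (hpoly t).exp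
    simpa [mul_comm] using this
  have hG1d : ∀ t : ℝ, HasDerivAt
      (fun t : ℝ => -(2 * S₁ + 2 * S₂ * t) * Real.exp (-(a + 2 * S₁ * t + S₂ * t ^ 2)))
      (((2 * S₁ + 2 * S₂ * t) ^ 2 - 2 * S₂) * Real.exp (-(a + 2 * S₁ * t + S₂ * t ^ 2))) t := by
    intro t
    have hf : HasDerivAt (fun t : ℝ => -(2 * S₁ + 2 * S₂ * t)) (-(2 * S₂)) t := by
      have : HasDerivAt (fun t : ℝ => 2 * S₁ + 2 * S₂ * t) (2 * S₂) t := by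
        have h0 := (hasDerivAt_const t (2 * S₁)).add ((hasDerivAt_id t).const_mul (2 * S₂))
        simp only [Pi.add_def, id] at h0
        simpa using h0
      exact this.neg
    have := hf.mul (hgd t)
    exact this.congr_deriv (by ring)
  -- bound on the second derivative
  have hG2le : ∀ t : ℝ,
      ((2 * S₁ + 2 * S₂ * t) ^ 2 - 2 * S₂) * Real.exp (-(a + 2 * S₁ * t + S₂ * t ^ 2)) ≤ B := by
    intro t
    have hqnn : 0 ≤ a + 2 * S₁ * t + S₂ * t ^ 2 := hq0 t
    have hexp : (0:ℝ) < Real.exp (-(a + 2 * S₁ * t + S₂ * t ^ 2)) := Real.exp_pos _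
    have h₁ : (S₁ + S₂ * t) ^ 2 * Real.exp (-(a + 2 * S₁ * t + S₂ * t ^ 2))
        ≤ ((a + 2 * S₁ * t + S₂ * t ^ 2) * S₂) * Real.exp (-(a + 2 * S₁ * t + S₂ * t ^ 2)) :=
      mul_le_mul_of_nonneg_right (hCS t) hexp.le
    have h₂ : S₂ * ((a + 2 * S₁ * t + S₂ * t ^ 2)
          * Real.exp (-(a + 2 * S₁ * t + S₂ * t ^ 2)))
        ≤ S₂ * Real.exp (-1) :=
      mul_le_mul_of_nonneg_left (gauss_aux_ue _ hqnn) hS₂0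
    have h₃ : (0:ℝ) ≤ S₂ * Real.exp (-(a + 2 * S₁ * t + S₂ * t ^ 2)) :=
      mul_nonneg hS₂0 hexp.le
    nlinarith [h₁, h₂, h₃, hB]
  -- ψ is monotone hence nonnegative for t ≥ 0
  have hψd : ∀ t : ℝ, HasDerivAt
      (fun t : ℝ => B * t
        - (-(2 * S₁ + 2 * S₂ * t) * Real.exp (-(a + 2 * S₁ * t + S₂ * t ^ 2))
            - -(2 * S₁) * Real.exp (-a)))
      (B - ((2 * S₁ + 2 * S₂ * t) ^ 2 - 2 * S₂) * Real.exp (-(a + 2 * S₁ * t + S₂ * t ^ 2)))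
      t := by
    intro t
    have h1 : HasDerivAt (fun t : ℝ => B * t) B t := by
      simpa using (hasDerivAt_id t).const_mul B
    exact h1.sub ((hG1d t).sub_const _)
  have hψnn : ∀ t : ℝ, 0 ≤ t →
      0 ≤ B * t - (-(2 * S₁ + 2 * S₂ * t) * Real.exp (-(a + 2 * S₁ * t + S₂ * t ^ 2))
            - -(2 * S₁) * Real.exp (-a)) := by
    have hmono : Monotone (fun t : ℝ => B * t
        - (-(2 * S₁ + 2 * S₂ * t) * Real.exp (-(a + 2 * S₁ * t + S₂ * t ^ 2))
            - -(2 * S₁) * Real.exp (-a))) := by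
      apply monotone_of_deriv_nonneg (fun t => (hψd t).differentiableAt)
      intro t
      rw [(hψd t).deriv]
      linarith [hG2le t]
    intro t ht
    calc (0:ℝ) = B * (0:ℝ) - (-(2 * S₁ + 2 * S₂ * 0)
            * Real.exp (-(a + 2 * S₁ * 0 + S₂ * 0 ^ 2)) - -(2 * S₁) * Real.exp (-a)) := by
          norm_num
      _ ≤ _ := hmono ht
  -- φ is monotone on [0, ∞)
  have hφd : ∀ t : ℝ, HasDerivAt
      (fun t : ℝ => Real.exp (-a) + -(2 * S₁) * Real.exp (-a) * t + B / 2 * t ^ 2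
        - Real.exp (-(a + 2 * S₁ * t + S₂ * t ^ 2)))
      (B * t - (-(2 * S₁ + 2 * S₂ * t) * Real.exp (-(a + 2 * S₁ * t + S₂ * t ^ 2))
            - -(2 * S₁) * Real.exp (-a))) t := by
    intro t
    have hb : HasDerivAt (fun t : ℝ => -(2 * S₁) * Real.exp (-a) * t)
        (-(2 * S₁) * Real.exp (-a)) t := by
      simpa using (hasDerivAt_id t).const_mul (-(2 * S₁) * Real.exp (-a))
    have hc : HasDerivAt (fun t : ℝ => B / 2 * t ^ 2) (B / 2 * (2 * t)) t := by
      simpa using (hasDerivAt_pow 2 t).const_mul (B / 2)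
    have h1 := (((hasDerivAt_const t (Real.exp (-a))).add hb).add hc).sub (hgd t)
    exact h1.congr_deriv (by ring)
  have hφmono : MonotoneOn
      (fun t : ℝ => Real.exp (-a) + -(2 * S₁) * Real.exp (-a) * t + B / 2 * t ^ 2
        - Real.exp (-(a + 2 * S₁ * t + S₂ * t ^ 2))) (Set.Ici (0:ℝ)) := by
    apply monotoneOn_of_deriv_nonneg (convex_Ici 0)
    · exact fun t _ => ((hφd t).differentiableAt).continuousAt.continuousWithinAt
    · exact fun t _ => ((hφd t).differentiableAt).differentiableWithinAt
    · intro t ht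
      rw [interior_Ici] at ht
      rw [(hφd t).deriv]
      exact hψnn t (le_of_lt ht)
  have hkey := hφmono (Set.mem_Ici.mpr le_rfl) (by norm_num : (1:ℝ) ∈ Set.Ici (0:ℝ)) zero_le_one
  simp only at hkey
  have h01 : Real.exp (-(a + 2 * S₁ * 0 + S₂ * 0 ^ 2)) = Real.exp (-a) := by
    congr 1; ring
  have h11 : Real.exp (-(a + 2 * S₁ * 1 + S₂ * 1 ^ 2)) = Real.exp (-(a + 2 * S₁ + S₂)) := by
    congr 1; ring
  rw [h01, h11] at hkey
  linarith [hkey]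

/-- **Quadratic majorization of the Gaussian kernel.**
For a `p×p` diagonal matrix `Ω` with nonnegative diagonal entries `ω_l` and
`γ(z) = exp(-zᵀΩz)`, for all `z, z' ∈ ℝ^p`:
`γ(z) ≤ γ(z') - 2γ(z')(Ωz')ᵀ(z - z') + (2/e)(max_l ω_l)‖z - z'‖₂²`,
a quadratic function of `z` which majorizes `γ` and touches it at `z = z'`. -/
theorem gauss_kernel_quadratic_majorization (p : ℕ) (hp : 0 < p)
    (ω : Fin p → ℝ) (hω : ∀ l, 0 ≤ ω l) (z z' : Fin p → ℝ) :
    Real.exp (-∑ l, ω l * z l ^ 2) ≤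
      Real.exp (-∑ l, ω l * z' l ^ 2)
        - 2 * Real.exp (-∑ l, ω l * z' l ^ 2) * ∑ l, ω l * z' l * (z l - z' l)
        + (2 / Real.exp 1) * (⨆ l, ω l) * ∑ l, (z l - z' l) ^ 2 := by
  have hne : Nonempty (Fin p) := ⟨⟨0, hp⟩⟩
  set a : ℝ := ∑ l, ω l * z' l ^ 2 with ha
  set S₁ : ℝ := ∑ l, ω l * z' l * (z l - z' l) with hS₁
  set S₂ : ℝ := ∑ l, ω l * (z l - z' l) ^ 2 with hS₂
  set D : ℝ := ∑ l, (z l - z' l) ^ 2 with hD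
  set M : ℝ := ⨆ l, ω l with hM
  have hMω : ∀ l, ω l ≤ M := fun l => le_ciSup (Set.Finite.bddAbove (Set.finite_range ω)) l
  have hM0 : 0 ≤ M := le_trans (hω ⟨0, hp⟩) (hMω _)
  have hS₂0 : 0 ≤ S₂ :=
    Finset.sum_nonneg fun l _ => mul_nonneg (hω l) (sq_nonneg _)
  have hD0 : 0 ≤ D := Finset.sum_nonneg fun l _ => sq_nonneg _
  have hS₂M : S₂ ≤ M * D := by
    rw [hS₂, hD, Finset.mul_sum]
    exact Finset.sum_le_sum fun l _ =>
      mul_le_mul_of_nonneg_right (hMω l) (sq_nonneg _)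
  have hqsum : ∀ t : ℝ, a + 2 * S₁ * t + S₂ * t ^ 2
      = ∑ l, ω l * (z' l + t * (z l - z' l)) ^ 2 := by
    intro t
    have h : ∀ l : Fin p, ω l * (z' l + t * (z l - z' l)) ^ 2
        = ω l * z' l ^ 2 + 2 * t * (ω l * z' l * (z l - z' l))
          + t ^ 2 * (ω l * (z l - z' l) ^ 2) := fun l => by ring
    rw [Finset.sum_congr rfl fun l _ => h l, Finset.sum_add_distrib,
      Finset.sum_add_distrib, ← Finset.mul_sum, ← Finset.mul_sum, ha, hS₁, hS₂]
    ring
  have hq0 : ∀ t : ℝ, 0 ≤ a + 2 * S₁ * t + S₂ * t ^ 2 := by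
    intro t
    rw [hqsum t]
    exact Finset.sum_nonneg fun l _ => mul_nonneg (hω l) (sq_nonneg _)
  have hCS : ∀ t : ℝ, (S₁ + S₂ * t) ^ 2 ≤ (a + 2 * S₁ * t + S₂ * t ^ 2) * S₂ := by
    intro t
    have hlin : S₁ + S₂ * t
        = ∑ l, (Real.sqrt (ω l) * (z' l + t * (z l - z' l)))
            * (Real.sqrt (ω l) * (z l - z' l)) := by
      have h : ∀ l : Fin p, (Real.sqrt (ω l) * (z' l + t * (z l - z' l)))
          * (Real.sqrt (ω l) * (z l - z' l))
          = ω l * z' l * (z l - z' l) + t * (ω l * (z l - z' l) ^ 2) := fun l => by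
        have hm := Real.mul_self_sqrt (hω l)
        linear_combination ((z' l + t * (z l - z' l)) * (z l - z' l)) * hm
      rw [Finset.sum_congr rfl fun l _ => h l, Finset.sum_add_distrib,
        ← Finset.mul_sum, hS₁, hS₂]
      ring
    have hsq1 : ∀ l : Fin p, (Real.sqrt (ω l) * (z' l + t * (z l - z' l))) ^ 2
        = ω l * (z' l + t * (z l - z' l)) ^ 2 := fun l => by
      rw [mul_pow, Real.sq_sqrt (hω l)]
    have hsq2 : ∀ l : Fin p, (Real.sqrt (ω l) * (z l - z' l)) ^ 2
        = ω l * (z l - z' l) ^ 2 := fun l => by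
      rw [mul_pow, Real.sq_sqrt (hω l)]
    calc (S₁ + S₂ * t) ^ 2
        = (∑ l, (Real.sqrt (ω l) * (z' l + t * (z l - z' l)))
            * (Real.sqrt (ω l) * (z l - z' l))) ^ 2 := by rw [hlin]
      _ ≤ (∑ l, (Real.sqrt (ω l) * (z' l + t * (z l - z' l))) ^ 2)
            * ∑ l, (Real.sqrt (ω l) * (z l - z' l)) ^ 2 :=
          Finset.sum_mul_sq_le_sq_mul_sq _ _ _
      _ = (a + 2 * S₁ * t + S₂ * t ^ 2) * S₂ := by
          rw [Finset.sum_congr rfl fun l _ => hsq1 l,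
            Finset.sum_congr rfl fun l _ => hsq2 l, ← hqsum t, hS₂]
  have hB : 4 * S₂ * Real.exp (-1) ≤ 4 / Real.exp 1 * (M * D) := by
    rw [Real.exp_neg, div_eq_mul_inv]
    have hinv : (0:ℝ) ≤ (Real.exp 1)⁻¹ := inv_nonneg.mpr (Real.exp_pos 1).le
    nlinarith
  have hmain := gauss_aux a S₁ S₂ (4 / Real.exp 1 * (M * D)) hS₂0 hq0 hCS hB
  have hz : ∑ l, ω l * z l ^ 2 = a + 2 * S₁ + S₂ := by
    have h := hqsum 1
    have h2 : ∀ l : Fin p, ω l * (z' l + 1 * (z l - z' l)) ^ 2 = ω l * z l ^ 2 :=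
      fun l => by ring
    rw [Finset.sum_congr rfl fun l _ => h2 l] at h
    rw [← h]; ring
  rw [hz]
  have hhalf : 4 / Real.exp 1 * (M * D) / 2 = 2 / Real.exp 1 * M * D := by ring
  rw [hhalf] at hmain
  linarith
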